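/- If gr_0(F) and gr_i(F) for every i ≥ 1 are flat R-modules, then Rees(A, F) is flat as a module over the polynomial ring R[X]. -/

import Mathlib

open LinearMap TensorProduct Polynomial

section Exactness

variable {S : Type*} [CommRing S]
variable {A M C : Type*} [AddCommGroup A] [AddCommGroup M] [AddCommGroup C]
variable [Module S A] [Module S M] [Module S C]

lemma dual_exact_aux {f : A →ₗ[S] M} {g : M →ₗ[S] C} (he : Function.Exact f g) :
    Function.Exact (CharacterModule.dual g) (CharacterModule.dual f) := by
  intro c
  constructor
  · intro hc
    have hvanish : ∀ m : M, g m = 0 → c m = 0 := by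
      intro m hm
      obtain ⟨a, rfl⟩ := (he m).1 hm
      exact DFunLike.congr_fun hc a
    set gZ : M →ₗ[ℤ] C := g.toAddMonoidHom.toIntLinearMap with hgZ
    set cZ : M →ₗ[ℤ] AddCircle (1 : ℚ) := c.toIntLinearMap with hcZ
    have hKer : LinearMap.ker gZ ≤ LinearMap.ker cZ := by
      intro m hm
      exact hvanish m hm
    set cbar := Submodule.liftQ (LinearMap.ker gZ) cZ hKer
    set j : (M ⧸ LinearMap.ker gZ) →ₗ[ℤ] C :=
      (LinearMap.range gZ).subtype ∘ₗ (gZ.quotKerEquivRange).toLinearMap with hj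
    have hjinj : Function.Injective j := by
      apply Function.Injective.comp (Submodule.injective_subtype _)
      exact gZ.quotKerEquivRange.injective
    obtain ⟨c', hc'⟩ := CharacterModule.dual_surjective_of_injective j hjinj
      (cbar.toAddMonoidHom)
    refine ⟨c', ?_⟩
    ext m
    have h1 : (CharacterModule.dual j c') (Submodule.Quotient.mk m) =
        cbar (Submodule.Quotient.mk m) := DFunLike.congr_fun hc' _
    have h2 : j (Submodule.Quotient.mk m) = g m := by
      simp only [hj, LinearMap.comp_apply, LinearEquiv.coe_coe, Submodule.subtype_apply,
        LinearMap.quotKerEquivRange_apply_mk]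
      rfl
    have h1' : c' (j (Submodule.Quotient.mk m)) = cbar (Submodule.Quotient.mk m) := h1
    rw [h2] at h1'
    exact h1'
  · rintro ⟨c', rfl⟩
    ext a
    show c' (g (f a)) = 0
    rw [he.apply_apply_eq_zero a, map_zero]

lemma flat_extension (f : A →ₗ[S] M) (g : M →ₗ[S] C) (hf : Function.Injective f)
    (hg : Function.Surjective g) (he : Function.Exact f g)
    (hA : Module.Flat S A) (hC : Module.Flat S C) : Module.Flat S M := by
  rw [Module.Flat.iff_characterModule_baer] at hA hC ⊢
  intro I φ
  set π := CharacterModule.dual f with hπdef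
  have hπ : Function.Surjective π := CharacterModule.dual_surjective_of_injective f hf
  set ι := CharacterModule.dual g with hιdef
  have hι : Function.Injective ι := by
    intro c₁ c₂ hcc
    ext x
    obtain ⟨m, rfl⟩ := hg x
    exact DFunLike.congr_fun hcc m
  obtain ⟨G, hG⟩ := hA I (π ∘ₗ φ)
  obtain ⟨m₀, hm₀⟩ := hπ (G 1)
  set h : S →ₗ[S] CharacterModule M := LinearMap.toSpanSingleton S _ m₀ with hh
  have hπh : ∀ s : S, π (h s) = G s := by
    intro s
    have : h s = s • m₀ := rfl
    rw [this, map_smul, hm₀, ← map_smul, smul_eq_mul, mul_one]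
  set ψ : I →ₗ[S] CharacterModule M := φ - h ∘ₗ I.subtype with hψdef
  have hψ : ∀ x : I, ψ x ∈ Set.range ι := by
    intro x
    apply (dual_exact_aux he (ψ x)).mp
    have : π (ψ x) = π (φ x) - π (h x) := by simp [hψdef, map_sub]
    have e1 : π (φ x) = G ↑x := (hG ↑x x.2).symm
    rw [this, e1, hπh]
    simp
  set e := LinearEquiv.ofInjective ι hι with he'
  have hmemr : ∀ x : ↥I, ψ x ∈ LinearMap.range ι := fun x => by
    obtain ⟨y, hy⟩ := hψ x; exact ⟨y, hy⟩
  set ψ' : I →ₗ[S] CharacterModule C :=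
    e.symm.toLinearMap ∘ₗ (ψ.codRestrict (LinearMap.range ι) hmemr) with hψ'def
  have hιψ' : ∀ x : I, ι (ψ' x) = ψ x := by
    intro x
    have h2 : e (ψ' x) = ψ.codRestrict (LinearMap.range ι) hmemr x := by
      rw [hψ'def]; exact e.apply_symm_apply _
    have h3 := congrArg Subtype.val h2
    rw [LinearEquiv.ofInjective_apply] at h3
    simpa using h3
  obtain ⟨K, hK⟩ := hC I ψ'
  refine ⟨h + ι ∘ₗ K, fun x hx => ?_⟩
  have : (h + ι ∘ₗ K) x = h x + ι (K x) := rfl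
  rw [this, hK x hx, hιψ', hψdef]
  simp

lemma flat_of_iSup {M : Type*} [AddCommGroup M] [Module S M] (N : ℕ → Submodule S M)
    (hmono : Monotone N) (htop : (⨆ n, N n) = ⊤) (hflat : ∀ n, Module.Flat S (N n)) :
    Module.Flat S M := by
  rw [Module.Flat.iff_rTensor_injective']
  intro I
  rw [injective_iff_map_eq_zero]
  intro x hx
  have hdir : Directed (· ≤ ·) (fun n => LinearMap.range (lTensor (↥I) (N n).subtype)) := by
    apply Monotone.directed_le
    intro m n hmn z hz
    obtain ⟨y, rfl⟩ := hz
    have hcomp : (N n).subtype ∘ₗ Submodule.inclusion (hmono hmn) = (N m).subtype := by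
      ext y; rfl
    refine ⟨lTensor (↥I) (Submodule.inclusion (hmono hmn)) y, ?_⟩
    rw [← LinearMap.comp_apply, ← lTensor_comp, hcomp]
  have hmem : x ∈ ⨆ n, LinearMap.range (lTensor (↥I) (N n).subtype) := by
    have : ∀ z : (↥I) ⊗[S] M, z ∈ ⨆ n, LinearMap.range (lTensor (↥I) (N n).subtype) := by
      intro z
      induction z with
      | zero => exact zero_mem _
      | tmul i m =>
        have hm : m ∈ ⨆ n, N n := htop ▸ Submodule.mem_top
        obtain ⟨n, hn⟩ := (Submodule.mem_iSup_of_directed _ hmono.directed_le).1 hm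
        exact Submodule.mem_iSup_of_mem n ⟨i ⊗ₜ (⟨m, hn⟩ : N n), rfl⟩
      | add a b ha hb => exact add_mem ha hb
    exact this x
  obtain ⟨n, y, hy⟩ := (Submodule.mem_iSup_of_directed _ hdir).1 hmem
  have hnat : rTensor M I.subtype (lTensor (↥I) (N n).subtype y)
      = lTensor S (N n).subtype (rTensor (↥(N n)) I.subtype y) := by
    rw [← LinearMap.comp_apply, ← LinearMap.comp_apply, rTensor_comp_lTensor,
      lTensor_comp_rTensor]
  have hz : lTensor S (N n).subtype (rTensor (↥(N n)) I.subtype y) = 0 := by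
    rw [← hnat, hy, hx]
  have hinj1 : Function.Injective (lTensor S (N n).subtype) :=
    Module.Flat.lTensor_preserves_injective_linearMap _ (Submodule.injective_subtype _)
  have hy0 : rTensor (↥(N n)) I.subtype y = 0 := hinj1 (by simpa using hz)
  have hinj2 := (Module.Flat.iff_rTensor_injective' (R := S) (M := ↥(N n))).1 (hflat n) I
  have : y = 0 := hinj2 (by simpa using hy0)
  rw [← hy, this, map_zero]

end Exactness

section PolyModule

variable (R : Type*) [CommRing R] (V : Type*) [AddCommGroup V] [Module R V]

noncomputable def toFinsuppLinear : Polynomial R ≃ₗ[R] (ℕ →₀ R) :=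
  AddEquiv.toLinearEquiv
    ((Polynomial.toFinsuppIso R).toAddEquiv.trans AddMonoidAlgebra.coeffAddEquiv)
    (fun c x => rfl)

noncomputable def polyModMap : Polynomial R ⊗[R] V →ₗ[Polynomial R] PolynomialModule R V :=
  LinearMap.liftBaseChange _ (PolynomialModule.lsingle R 0)

noncomputable def polyTensorEquiv : Polynomial R ⊗[R] V ≃ₗ[R] (ℕ →₀ V) :=
  (TensorProduct.congr (toFinsuppLinear R) (LinearEquiv.refl R V)).trans
    (TensorProduct.finsuppScalarLeft R V ℕ)

noncomputable def finsuppToPM : (ℕ →₀ V) →ₗ[R] PolynomialModule R V :=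
  (Finsupp.lsum ℕ) (fun i => PolynomialModule.lsingle R i)

lemma finsuppToPM_apply (x : ℕ →₀ V) (i : ℕ) : (finsuppToPM R V x).coeff i = x i := by
  induction x using Finsupp.induction_linear with
  | zero => simp [finsuppToPM]
  | add f g hf hg =>
      rw [map_add, PolynomialModule.coeff_add, Finsupp.add_apply, hf, hg, Finsupp.add_apply]
  | single j v =>
      rw [finsuppToPM, Finsupp.lsum_single, PolynomialModule.lsingle_apply,
        Finsupp.single_apply]

lemma finsuppToPM_injective : Function.Injective (finsuppToPM R V) := by
  intro x y hxy
  ext i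
  have h := congrArg (fun z => PolynomialModule.coeff z i) hxy
  rwa [finsuppToPM_apply, finsuppToPM_apply] at h

lemma polyModMap_eq (z : Polynomial R ⊗[R] V) :
    polyModMap R V z = finsuppToPM R V (polyTensorEquiv R V z) := by
  induction z with
  | zero => simp
  | add a b ha hb => simp [map_add, ha, hb]
  | tmul p v =>
    induction p using Polynomial.induction_on' with
    | add p q hp hq =>
        rw [add_tmul, map_add, hp, hq, map_add, map_add]
    | monomial k a =>
        rw [polyModMap, LinearMap.liftBaseChange_tmul]
        rw [show polyTensorEquiv R V ((monomial k a) ⊗ₜ[R] v)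
            = Finsupp.single k (a • v) by
          simp only [polyTensorEquiv, LinearEquiv.trans_apply, TensorProduct.congr_tmul,
            LinearEquiv.refl_apply]
          rw [show toFinsuppLinear R (monomial k a) = Finsupp.single k a by
            show ((monomial k) a).toFinsupp.coeff = Finsupp.single k a
            rw [Polynomial.toFinsupp_monomial]; rfl]
          rw [TensorProduct.finsuppScalarLeft_apply_tmul, Finsupp.sum_single_index] <;> simp]
        rw [finsuppToPM, Finsupp.lsum_single]
        rw [show (PolynomialModule.lsingle R 0) v = PolynomialModule.single R 0 v from rfl,
          show (PolynomialModule.lsingle R k) (a • v) = PolynomialModule.single R k (a • v)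
            from rfl, PolynomialModule.monomial_smul_single]
        simp

lemma polyModMap_bijective : Function.Bijective (polyModMap R V) := by
  constructor
  · intro x y hxy
    rw [polyModMap_eq, polyModMap_eq] at hxy
    exact (polyTensorEquiv R V).injective (finsuppToPM_injective R V hxy)
  · intro z
    induction z using PolynomialModule.induction_linear with
    | zero => exact ⟨0, map_zero _⟩
    | add f g hf hg =>
        obtain ⟨x, hx⟩ := hf; obtain ⟨y, hy⟩ := hg
        exact ⟨x + y, by rw [map_add, hx, hy]⟩
    | single i v =>
        refine ⟨(monomial i 1) ⊗ₜ v, ?_⟩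
        rw [polyModMap, LinearMap.liftBaseChange_tmul]
        have : (PolynomialModule.lsingle R 0) v = PolynomialModule.single R 0 v := rfl
        rw [this, PolynomialModule.monomial_smul_single]
        simp

lemma polyModule_flat [Module.Flat R V] :
    Module.Flat (Polynomial R) (PolynomialModule R V) :=
  Module.Flat.of_linearEquiv
    (LinearEquiv.ofBijective (polyModMap R V) (polyModMap_bijective R V)).symm

end PolyModule

section Rees

variable {R A : Type*} [CommRing R] [CommRing A] [Algebra R A]
variable [Algebra (Polynomial R) (Polynomial A)]

/-- The `n`-th piece of the filtration of the Rees algebra. -/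
def reesMn (F : ℕ → Submodule R A) (hmono : Monotone F)
    (T : Subalgebra (Polynomial R) (Polynomial A))
    (halg : algebraMap (Polynomial R) (Polynomial A) = Polynomial.mapRingHom (algebraMap R A))
    (hT : ∀ p : T, ∀ i, (p : Polynomial A).coeff i ∈ F i) (n : ℕ) :
    Submodule (Polynomial R) T where
  carrier := {p : T | ∀ i, n ≤ i → (p : Polynomial A).coeff i ∈ F n}
  add_mem' := by
    intro a b ha hb i hi
    have : ((a + b : T) : Polynomial A) = (a : Polynomial A) + (b : Polynomial A) := rfl
    rw [this, Polynomial.coeff_add]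
    exact add_mem (ha i hi) (hb i hi)
  zero_mem' := by
    intro i hi
    have : ((0 : T) : Polynomial A) = 0 := rfl
    rw [this, Polynomial.coeff_zero]
    exact zero_mem _
  smul_mem' := by
    intro s p hp i hi
    have hcoe : ((s • p : T) : Polynomial A)
        = Polynomial.map (algebraMap R A) s * (p : Polynomial A) := by
      have h1 : ((s • p : T) : Polynomial A) = s • (p : Polynomial A) := rfl
      rw [h1, Algebra.smul_def, halg]
      rfl
    rw [hcoe, Polynomial.coeff_mul]
    apply Submodule.sum_mem
    rintro ⟨j, k⟩ _
    simp only [Polynomial.coeff_map]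
    rw [← Algebra.smul_def]
    apply Submodule.smul_mem
    rcases le_or_gt n k with h | h
    · exact hp k h
    · exact hmono h.le (hT p k)

lemma reesMn_mono (F : ℕ → Submodule R A) (hmono : Monotone F)
    (T : Subalgebra (Polynomial R) (Polynomial A)) (halg) (hT) :
    Monotone (reesMn F hmono T halg hT) := by
  intro m n hmn p hp i hi
  exact hmono hmn (hp i (le_trans hmn hi))

lemma reesMn_iSup (F : ℕ → Submodule R A) (hmono : Monotone F)
    (T : Subalgebra (Polynomial R) (Polynomial A)) (halg) (hT) :
    (⨆ n, reesMn F hmono T halg hT n) = ⊤ := by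
  rw [eq_top_iff]
  intro p _
  apply Submodule.mem_iSup_of_mem ((p : Polynomial A).natDegree)
  intro i hi
  rcases eq_or_lt_of_le hi with h | h
  · rw [← h]; exact hT p _
  · rw [Polynomial.coeff_eq_zero_of_natDegree_lt h]
    exact zero_mem _

lemma reesMn_step (F : ℕ → Submodule R A) (hmono : Monotone F)
    (T : Subalgebra (Polynomial R) (Polynomial A))
    (halg : algebraMap (Polynomial R) (Polynomial A) = Polynomial.mapRingHom (algebraMap R A))
    (hT : ∀ p : T, ∀ i, (p : Polynomial A).coeff i ∈ F i)
    (hT' : ∀ p : Polynomial A, (∀ i, p.coeff i ∈ F i) → p ∈ T)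
    (n : ℕ) (V : Type*) [AddCommGroup V] [Module R V] (κ : (F n) →ₗ[R] V)
    (hκsurj : Function.Surjective κ) (P : Submodule R A) (hPF : ∀ i, i < n → F i ≤ P)
    (hPn : P ≤ F n)
    (hκker : ∀ (a : A) (h : a ∈ F n), (κ ⟨a, h⟩ = 0 ↔ a ∈ P)) :
    ∃ g : reesMn F hmono T halg hT n →ₗ[Polynomial R] PolynomialModule R V,
      Function.Surjective g ∧
        ∀ p : reesMn F hmono T halg hT n,
          (g p = 0 ↔ ∀ i, n ≤ i → ((p : T) : Polynomial A).coeff i ∈ P) := by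
  classical
  set M := reesMn F hmono T halg hT n with hM
  have hmem : ∀ (p : M) (i : ℕ), ((p : T) : Polynomial A).coeff (n + i) ∈ F n :=
    fun p i => p.2 (n + i) (Nat.le_add_right n i)
  -- the underlying function
  set qf : M → PolynomialModule R V := fun p => PolynomialModule.ofCoeff R (
    Finsupp.onFinset (((p : T) : Polynomial A).support.image (· - n))
      (fun i => κ ⟨((p : T) : Polynomial A).coeff (n + i), hmem p i⟩)
      (fun i hi => by
        simp only [Finset.mem_image]
        refine ⟨n + i, ?_, by omega⟩
        rw [Polynomial.mem_support_iff]
        intro hc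
        have h0 : (⟨((p : T) : Polynomial A).coeff (n + i), hmem p i⟩ : F n) = 0 :=
          Subtype.ext hc
        apply hi
        show κ ⟨((p : T) : Polynomial A).coeff (n + i), hmem p i⟩ = 0
        rw [h0, map_zero])) with hqf
  have hqval : ∀ (p : M) (i : ℕ),
      (qf p).coeff i = κ ⟨((p : T) : Polynomial A).coeff (n + i), hmem p i⟩ := fun p i => rfl
  -- coercion of scalar action
  have hsmulcoe : ∀ (s : Polynomial R) (p : M),
      (((s • p : M) : T) : Polynomial A)
        = Polynomial.map (algebraMap R A) s * ((p : T) : Polynomial A) := by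
    intro s p
    have h1 : (((s • p : M) : T) : Polynomial A) = s • (((p : T)) : Polynomial A) := rfl
    rw [h1, Algebra.smul_def, halg]
    rfl
  -- additivity
  have hqadd : ∀ p q : M, qf (p + q) = qf p + qf q := by
    intro p q
    refine PolynomialModule.coeff_injective (Finsupp.ext fun i => ?_)
    rw [PolynomialModule.coeff_add, Finsupp.add_apply, hqval, hqval, hqval]
    have hcoe : (((p + q : M) : T) : Polynomial A)
        = ((p : T) : Polynomial A) + ((q : T) : Polynomial A) := rfl
    have : (⟨(((p + q : M) : T) : Polynomial A).coeff (n + i), hmem _ i⟩ : F n)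
        = ⟨((p : T) : Polynomial A).coeff (n + i), hmem p i⟩
          + ⟨((q : T) : Polynomial A).coeff (n + i), hmem q i⟩ := by
      apply Subtype.ext
      simp [hcoe, Polynomial.coeff_add]
    rw [this, map_add]
  -- compatibility with X
  have hqX : ∀ p : M, qf ((Polynomial.X : Polynomial R) • p)
      = (Polynomial.X : Polynomial R) • qf p := by
    intro p
    have hXmon : (Polynomial.X : Polynomial R) = Polynomial.monomial 1 1 :=
      (Polynomial.monomial_one_one_eq_X).symm
    refine PolynomialModule.coeff_injective (Finsupp.ext fun i => ?_)
    have hcoe : ((((Polynomial.X : Polynomial R) • p : M) : T) : Polynomial A)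
        = Polynomial.X * ((p : T) : Polynomial A) := by
      rw [hsmulcoe, Polynomial.map_X]
    rw [hqval]
    rcases Nat.eq_zero_or_pos i with hi | hi
    · subst hi
      have hrhs : (((Polynomial.X : Polynomial R)) • qf p).coeff 0 = 0 := by
        rw [hXmon, PolynomialModule.monomial_smul_apply, if_neg (by omega : ¬ (1:ℕ) ≤ 0)]
      rw [hrhs]
      rcases Nat.eq_zero_or_pos n with hn | hn
      · subst hn
        have hc0 : ((((Polynomial.X : Polynomial R) • p : M) : T) : Polynomial A).coeff (0 + 0)
            = 0 := by
          rw [hcoe]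
          simpa using Polynomial.mul_coeff_zero Polynomial.X ((p : T) : Polynomial A)
        have h0 : (⟨((((Polynomial.X : Polynomial R) • p : M) : T) : Polynomial A).coeff (0 + 0),
            hmem _ 0⟩ : F 0) = 0 := Subtype.ext hc0
        rw [h0, map_zero]
      · obtain ⟨m, rfl⟩ : ∃ m, n = m + 1 := ⟨n - 1, by omega⟩
        have hc : ((((Polynomial.X : Polynomial R) • p : M) : T) : Polynomial A).coeff (m + 1 + 0)
            = ((p : T) : Polynomial A).coeff m := by
          rw [hcoe]
          simpa using Polynomial.coeff_X_mul ((p : T) : Polynomial A) m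
        apply (hκker _ _).2
        rw [hc]
        exact hPF m (by omega) (hT (p : T) m)
    · obtain ⟨k, rfl⟩ : ∃ k, i = k + 1 := ⟨i - 1, by omega⟩
      have hrhs : (((Polynomial.X : Polynomial R)) • qf p).coeff (k + 1) = (qf p).coeff k := by
        rw [hXmon, PolynomialModule.monomial_smul_apply, if_pos (by omega : (1:ℕ) ≤ k + 1),
          one_smul, Nat.add_sub_cancel]
      rw [hrhs]
      have hc : ((((Polynomial.X : Polynomial R) • p : M) : T) : Polynomial A).coeff (n + (k + 1))
          = ((p : T) : Polynomial A).coeff (n + k) := by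
        rw [hcoe]
        simpa [Nat.add_assoc] using Polynomial.coeff_X_mul ((p : T) : Polynomial A) (n + k)
      have heq : (⟨((((Polynomial.X : Polynomial R) • p : M) : T) : Polynomial A).coeff (n + (k + 1)),
          hmem _ (k + 1)⟩ : F n) = ⟨((p : T) : Polynomial A).coeff (n + k), hmem p k⟩ :=
        Subtype.ext hc
      rw [heq, hqval]
  -- compatibility with C a
  have hqC : ∀ (a : R) (p : M), qf ((Polynomial.C a : Polynomial R) • p)
      = (Polynomial.C a : Polynomial R) • qf p := by
    intro a p
    refine PolynomialModule.coeff_injective (Finsupp.ext fun i => ?_)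
    have hcoe : (((Polynomial.C a • p : M) : T) : Polynomial A)
        = Polynomial.C (algebraMap R A a) * ((p : T) : Polynomial A) := by
      rw [hsmulcoe, Polynomial.map_C]
    have hrhs : ((Polynomial.C a : Polynomial R) • qf p).coeff i = a • (qf p).coeff i := by
      rw [show (Polynomial.C a : Polynomial R) = Polynomial.monomial 0 a from
        (Polynomial.monomial_zero_left (a := a)).symm, PolynomialModule.monomial_smul_apply,
        if_pos (Nat.zero_le i), Nat.sub_zero]
    rw [hqval, hrhs]
    have hc : (⟨(((Polynomial.C a • p : M) : T) : Polynomial A).coeff (n + i),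
        hmem _ i⟩ : F n) = a • ⟨((p : T) : Polynomial A).coeff (n + i), hmem p i⟩ := by
      apply Subtype.ext
      show ((((Polynomial.C a : Polynomial R) • p : M) : T) : Polynomial A).coeff (n + i)
        = a • (((p : T) : Polynomial A).coeff (n + i))
      rw [hcoe, Polynomial.coeff_C_mul, Algebra.smul_def]
    rw [hc, map_smul, hqval]
  -- the linear map
  set g : M →ₗ[Polynomial R] PolynomialModule R V :=
    { toFun := qf
      map_add' := hqadd
      map_smul' := by
        intro s p
        simp only [RingHom.id_apply]
        induction s using Polynomial.induction_on with
        | C a => exact hqC a p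
        | add u w hu hw => rw [add_smul, hqadd, hu, hw, add_smul]
        | monomial k a hk =>
            have h1 : (Polynomial.C a * Polynomial.X ^ (k + 1) : Polynomial R)
                = Polynomial.X * (Polynomial.C a * Polynomial.X ^ k) := by ring
            rw [h1, mul_smul, hqX, hk, mul_smul, mul_smul, mul_smul] } with hg
  have hgval : ∀ p : M, g p = qf p := fun p => rfl
  refine ⟨g, ?_, ?_⟩
  · -- surjectivity
    intro z
    induction z using PolynomialModule.induction_linear with
    | zero => exact ⟨0, map_zero _⟩
    | add u w hu hw =>
        obtain ⟨x, hx⟩ := hu; obtain ⟨y, hy⟩ := hw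
        exact ⟨x + y, by rw [map_add, hx, hy]⟩
    | single i v =>
        obtain ⟨⟨a, ha⟩, rfl⟩ := hκsurj v
        have hmemT : (Polynomial.monomial n a : Polynomial A) ∈ T := by
          apply hT'
          intro j
          rw [Polynomial.coeff_monomial]
          split
          · next h => rw [← h]; exact ha
          · exact zero_mem _
        have hmemM : (⟨(Polynomial.monomial n a : Polynomial A), hmemT⟩ : T) ∈ M := by
          intro j hj
          show (Polynomial.monomial n a : Polynomial A).coeff j ∈ F n
          rw [Polynomial.coeff_monomial]
          split
          · exact ha
          · exact zero_mem _
        set p0 : M := ⟨⟨(Polynomial.monomial n a : Polynomial A), hmemT⟩, hmemM⟩ with hp0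
        have hq0 : g p0 = PolynomialModule.single R 0 (κ ⟨a, ha⟩) := by
          refine PolynomialModule.coeff_injective (Finsupp.ext fun j => ?_)
          rw [hgval, hqval]
          rw [PolynomialModule.coeff_single, Finsupp.single_apply]
          rcases Nat.eq_zero_or_pos j with hj | hj
          · subst hj
            rw [if_pos rfl]
            have : ((p0 : T) : Polynomial A).coeff (n + 0) = a := by
              show (Polynomial.monomial n a : Polynomial A).coeff (n + 0) = a
              simp
            exact congrArg κ (Subtype.ext this)
          · rw [if_neg (by omega)]
            have : ((p0 : T) : Polynomial A).coeff (n + j) = 0 := by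
              show (Polynomial.monomial n a : Polynomial A).coeff (n + j) = 0
              rw [Polynomial.coeff_monomial, if_neg (by omega)]
            have h0 : (⟨((p0 : T) : Polynomial A).coeff (n + j), hmem p0 j⟩ : F n) = 0 :=
              Subtype.ext this
            rw [h0, map_zero]
        refine ⟨(Polynomial.monomial i 1 : Polynomial R) • p0, ?_⟩
        rw [map_smul, hq0, PolynomialModule.monomial_smul_single]
        simp
  · -- kernel characterization
    intro p
    constructor
    · intro hp i hi
      have hz : (qf p).coeff (i - n) = 0 := by
        rw [← hgval, hp]; rfl
      rw [hqval] at hz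
      have hni : n + (i - n) = i := by omega
      rw [← hni]
      exact (hκker _ (hmem p (i - n))).1 hz
    · intro hp
      refine PolynomialModule.coeff_injective (Finsupp.ext fun j => ?_)
      show (qf p).coeff j = (0 : PolynomialModule R V).coeff j
      rw [PolynomialModule.coeff_zero, Finsupp.zero_apply, hqval]
      exact (hκker _ (hmem p j)).2 (hp (n + j) (Nat.le_add_right n j))

end Rees
set_option synthInstance.maxHeartbeats 1000000 in
set_option maxHeartbeats 2000000 in
/-- With `F` a monotone multiplicative exhaustive filtration on a commutative
`R`-algebra `A` with `1 ∈ F 0`, if `gr_0(F) = F 0` and the graded pieces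
`gr_i(F) = F i ⧸ F (i-1)` (for `i ≥ 1`) are flat `R`-modules, then the Rees algebra
`{p : A[X] | ∀ i, p.coeff i ∈ F i}` is flat as a module over the polynomial ring `R[X]`,
where the `R[X]`-module structure comes from the coefficient-wise map `R[X] → A[X]`. -/
theorem stmt1 (R A : Type*) [CommRing R] [CommRing A] [Algebra R A]
    (F : ℕ → Submodule R A) (hmono : Monotone F) (hone : (1 : A) ∈ F 0)
    (hmul : ∀ i j, F i * F j ≤ F (i + j)) (hsup : (⨆ i, F i) = ⊤)
    (hflat0 : Module.Flat R (F 0))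
    (hflat : ∀ i, 1 ≤ i →
      Module.Flat R (F i ⧸ Submodule.comap (F i).subtype (F (i - 1)))) :
    letI : Algebra (Polynomial R) (Polynomial A) :=
      (Polynomial.mapRingHom (algebraMap R A)).toAlgebra
    ∀ T : Subalgebra (Polynomial R) (Polynomial A),
      (T : Set (Polynomial A)) = {p : Polynomial A | ∀ i, p.coeff i ∈ F i} →
      Module.Flat (Polynomial R) T := by
  letI inst : Algebra (Polynomial R) (Polynomial A) :=
    (Polynomial.mapRingHom (algebraMap R A)).toAlgebra
  intro T hT
  have halg : algebraMap (Polynomial R) (Polynomial A)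
      = Polynomial.mapRingHom (algebraMap R A) := rfl
  have hTmem : ∀ p : T, ∀ i, (p : Polynomial A).coeff i ∈ F i := by
    intro p i
    have hp : (p : Polynomial A) ∈ (T : Set (Polynomial A)) := p.2
    rw [hT] at hp
    exact hp i
  have hT' : ∀ p : Polynomial A, (∀ i, p.coeff i ∈ F i) → p ∈ T := by
    intro p hp
    rw [← SetLike.mem_coe, hT]
    exact hp
  have hflatM : ∀ n, Module.Flat (Polynomial R) (reesMn F hmono T halg hTmem n) := by
    intro n
    induction n with
    | zero =>
      obtain ⟨g, hsurj, hker⟩ := reesMn_step F hmono T halg hTmem hT' 0 (F 0)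
        (LinearMap.id) Function.surjective_id ⊥ (by omega) bot_le
        (by
          intro a h
          simp only [LinearMap.id_coe, id_eq, Submodule.mem_bot]
          exact ⟨fun h0 => by simpa using congrArg Subtype.val h0,
            fun h0 => by apply Subtype.ext; simpa using h0⟩)
      have hinj : Function.Injective g := by
        rw [injective_iff_map_eq_zero]
        intro p hp
        have := (hker p).1 hp
        apply Subtype.ext
        apply Subtype.ext
        apply Polynomial.ext
        intro i
        simpa using this i (Nat.zero_le i)
      haveI : Module.Flat R (F 0) := hflat0
      haveI : Module.Flat (Polynomial R) (PolynomialModule R (F 0)) := polyModule_flat R (F 0)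
      exact Module.Flat.of_linearEquiv (LinearEquiv.ofBijective g ⟨hinj, hsurj⟩)
    | succ m ih =>
      set Q : Submodule R (F (m + 1)) :=
        Submodule.comap (F (m + 1)).subtype (F m) with hQ
      obtain ⟨g, hsurj, hker⟩ := reesMn_step F hmono T halg hTmem hT' (m + 1)
        ((F (m + 1)) ⧸ Q) Q.mkQ (Submodule.mkQ_surjective Q) (F m)
        (fun i hi => hmono (by omega)) (hmono (by omega))
        (by
          intro a h
          rw [Submodule.mkQ_apply, Submodule.Quotient.mk_eq_zero]
          exact Iff.rfl)
      have hle : reesMn F hmono T halg hTmem m ≤ reesMn F hmono T halg hTmem (m + 1) :=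
        reesMn_mono F hmono T halg hTmem (by omega)
      set f := Submodule.inclusion hle with hf
      have hfi : Function.Injective f := Submodule.inclusion_injective hle
      have hexact : Function.Exact f g := by
        intro x
        rw [hker x]
        constructor
        · intro h
          have hx : (x : T) ∈ reesMn F hmono T halg hTmem m := by
            intro i hi
            rcases eq_or_lt_of_le hi with h' | h'
            · rw [← h']
              exact hTmem (x : T) m
            · exact h i (by omega)
          exact ⟨⟨(x : T), hx⟩, Subtype.ext rfl⟩
        · rintro ⟨y, rfl⟩ i hi
          have : ((f y : T) : Polynomial A) = ((y : T) : Polynomial A) := rfl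
          rw [this]
          exact y.2 i (by omega)
      haveI : Module.Flat R ((F (m + 1)) ⧸ Q) := hflat (m + 1) (by omega)
      haveI hC : Module.Flat (Polynomial R) (PolynomialModule R ((F (m + 1)) ⧸ Q)) :=
        polyModule_flat R _
      exact flat_extension (S := Polynomial R) (A := reesMn F hmono T halg hTmem m)
        (M := reesMn F hmono T halg hTmem (m + 1)) f g hfi hsurj hexact ih hC
  exact flat_of_iSup (reesMn F hmono T halg hTmem) (reesMn_mono F hmono T halg hTmem)
    (reesMn_iSup F hmono T halg hTmem) hflatM
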